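/- Let φ : (M, J, θ) → (N, h, J') be a smooth map from a Sasakian manifold to a Kähler manifold and φ̃ : C(M) → N its conic extension φ̃(x,r) = φ(x) on the Kähler cone (C(M), g̃, J̃). Then φ is CR holomorphic (dφ∘J = J'∘dφ on M) if and only if φ̃ is holomorphic (dφ̃∘J̃ = J'∘dφ̃); similarly for anti-holomorphic. -/
import Mathlib

/-- Let `φ : (M,J,θ) → (N,h,J')` be a smooth map from a Sasakian manifold to a
Kähler manifold and `φ̃ : C(M) → N`, `φ̃(x,r) = φ(x)`, its conic extension to the
Kähler cone `(C(M), g̃, J̃)`.  Then `φ` is CR holomorphic (`dφ∘J = J'∘dφ`) iff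
`φ̃` is holomorphic (`dφ̃∘J̃ = J'∘dφ̃`); similarly for anti-holomorphic (`ε = −1`).
Working at a point with `r = r0 > 0`, cone tangent vectors are pairs
`(a,Y) ∈ ℝ × V` with `∂r = (1,0)`, `ζ = (r0/2)∂r`, and the cone complex
structure is `J̃(a,Y) = (−(r0/2)θ(Y), JY + (2a/r0)T)`. -/
theorem conic_extension_holomorphic_iff_crHolomorphic
    {V Wn : Type*} [AddCommGroup V] [Module ℝ V]
    [AddCommGroup Wn] [Module ℝ Wn]
    (J : V →ₗ[ℝ] V) (θ : V →ₗ[ℝ] ℝ) (T : V)    -- CR structure, contact form, Reeb field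
    (J' : Wn →ₗ[ℝ] Wn)                          -- complex structure of the Kähler target
    (dphi : V →ₗ[ℝ] Wn)                         -- differential of φ
    (r0 : ℝ) (hr0 : 0 < r0)
    (hJT : J T = 0)
    (hJ'2 : ∀ s, J' (J' s) = -s)
    -- the almost complex structure J̃ of the cone at the point
    (Jt : ℝ × V → ℝ × V)
    (hJt : ∀ p : ℝ × V, Jt p = (-(r0 / 2) * θ p.2, J p.2 + ((2 / r0) * p.1) • T))
    -- the differential of the conic extension φ̃
    (dphit : ℝ × V → Wn) (hdphit : ∀ p, dphit p = dphi p.2)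
    -- ε = 1: holomorphic; ε = −1: anti-holomorphic
    (ε : ℝ) (hε : ε = 1 ∨ ε = -1) :
    (∀ X : V, dphi (J X) = ε • J' (dphi X))
      ↔ (∀ p : ℝ × V, dphit (Jt p) = ε • J' (dphit p)) := by
  have hεne : ε ≠ 0 := by rcases hε with h | h <;> simp [h]
  constructor
  · intro h p
    -- first: dphi T = 0
    have hT : dphi T = 0 := by
      have h1 := h T
      rw [hJT, map_zero] at h1
      have h2 : J' (dphi T) = 0 := by
        have := smul_eq_zero.mp h1.symm
        tauto
      have h3 := hJ'2 (dphi T)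
      rw [h2, map_zero] at h3
      exact (neg_eq_zero.mp h3.symm)
    rw [hdphit, hdphit, hJt]
    simp only [map_add, map_smul, hT, smul_zero, add_zero]
    exact h p.2
  · intro h X
    have := h (0, X)
    rw [hdphit, hdphit, hJt] at this
    simpa using this
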